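/- Let P ⊂ ℝⁿ be a compact convex set with 0 in its interior and support function F_P. Let F : ℝⁿ → ℝ be a convex function with Legendre transform G, such that F ≤ F_P + C on ℝⁿ for some constant C. The following are equivalent: (i) G(s) < +∞ for all s ∈ int P; (ii) for every ε ∈ (0, 1) there exists M_ε > 0 such that F(x) ≥ (1 − ε)F_P(x) − M_ε for all x ∈ ℝⁿ. -/

import Mathlib

open MeasureTheory Filter Topology RealInnerProductSpace

/-- Let `P ⊂ ℝⁿ` be compact convex with `0 ∈ int P` and support function
`F_P`. Let `F : ℝⁿ → ℝ` be convex with Legendre transform `G`, with `F ≤ F_P + C`.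
Then `G < +∞` on `int P` if and only if for every `ε ∈ (0,1)` there is `M_ε > 0` with
`F ≥ (1 - ε) F_P - M_ε` on `ℝⁿ`. -/
theorem legendre_finite_interior_iff_growth
    (n : ℕ) (P : Set (EuclideanSpace ℝ (Fin n)))
    (hPc : IsCompact P) (hPconv : Convex ℝ P)
    (h0 : (0 : EuclideanSpace ℝ (Fin n)) ∈ interior P)
    (FP : EuclideanSpace ℝ (Fin n) → ℝ)
    (hFP : ∀ x, IsGreatest ((fun s => ⟪x, s⟫) '' P) (FP x))
    (F : EuclideanSpace ℝ (Fin n) → ℝ) (hF : ConvexOn ℝ Set.univ F)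
    (G : EuclideanSpace ℝ (Fin n) → EReal)
    (hG : ∀ s, G s = ⨆ x, ((⟪x, s⟫ - F x : ℝ) : EReal))
    (C : ℝ) (hFC : ∀ x, F x ≤ FP x + C) :
    (∀ s ∈ interior P, G s < ⊤) ↔
      (∀ ε ∈ Set.Ioo (0:ℝ) 1, ∃ M > (0:ℝ), ∀ x, (1 - ε) * FP x - M ≤ F x) := by
  -- basic facts
  have hle : ∀ s x, ((⟪x, s⟫ - F x : ℝ) : EReal) ≤ G s := by
    intro s x
    rw [hG]
    exact le_iSup (fun x => ((⟪x, s⟫ - F x : ℝ) : EReal)) x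
  have hGbot : ∀ s, G s ≠ ⊥ := fun s =>
    ne_bot_of_le_ne_bot (EReal.coe_ne_bot _) (hle s 0)
  constructor
  · -- forward direction
    intro hfin ε hε
    set g : EuclideanSpace ℝ (Fin n) → ℝ := fun s => (G s).toReal with hg
    -- real inequality on interior
    have key : ∀ s ∈ interior P, ∀ x, ⟪x, s⟫ - F x ≤ g s := by
      intro s hs x
      have h1 := EReal.toReal_le_toReal (hle s x) (EReal.coe_ne_bot _)
        (ne_of_lt (hfin s hs))
      rwa [EReal.toReal_coe] at h1
    -- g is convex on interior P
    have hgconv : ConvexOn ℝ (interior P) g := by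
      refine ⟨hPconv.interior, ?_⟩
      intro s hs t ht a b ha hb hab
      have hm : a • s + b • t ∈ interior P := hPconv.interior hs ht ha hb hab
      have hsup : G (a • s + b • t) ≤ ((a * g s + b * g t : ℝ) : EReal) := by
        rw [hG]
        refine iSup_le fun x => ?_
        rw [EReal.coe_le_coe_iff]
        have h1 : ⟪x, s⟫ - F x ≤ g s := key s hs x
        have h2 : ⟪x, t⟫ - F x ≤ g t := key t ht x
        have hi : ⟪x, a • s + b • t⟫ = a * ⟪x, s⟫ + b * ⟪x, t⟫ := by
          rw [inner_add_right, real_inner_smul_right, real_inner_smul_right]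
        have habF : a * F x + b * F x = F x := by rw [← add_mul, hab, one_mul]
        have ha1 : a * (⟪x, s⟫ - F x) ≤ a * g s := mul_le_mul_of_nonneg_left h1 ha
        have hb1 : b * (⟪x, t⟫ - F x) ≤ b * g t := mul_le_mul_of_nonneg_left h2 hb
        rw [hi]
        nlinarith [ha1, hb1, habF]
      have := EReal.toReal_le_toReal hsup (hGbot _) (EReal.coe_ne_top _)
      rw [EReal.toReal_coe] at this; exact this
    -- g is continuous on interior P, bounded on compact subset
    have hgcont : ContinuousOn g (interior P) := hgconv.continuousOn isOpen_interior
    set K : Set (EuclideanSpace ℝ (Fin n)) := (fun s => (1 - ε) • s) '' P with hK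
    have hKint : K ⊆ interior P := by
      rintro _ ⟨s, hsP, rfl⟩
      have := hPconv.combo_interior_self_mem_interior h0 hsP hε.1
        (le_of_lt (by linarith [hε.2] : (0:ℝ) < 1 - ε)) (by ring)
      simpa using this
    have hKc : IsCompact K := hPc.image (continuous_const_smul _)
    obtain ⟨B, hB⟩ := hKc.exists_bound_of_continuousOn (hgcont.mono hKint)
    refine ⟨|B| + 1, by positivity, fun x => ?_⟩
    obtain ⟨t, htP, hteq⟩ := (hFP x).1
    have htK : (1 - ε) • t ∈ K := ⟨t, htP, rfl⟩
    have h1 : ⟪x, (1 - ε) • t⟫ - F x ≤ g ((1 - ε) • t) := key _ (hKint htK) x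
    have h2 : g ((1 - ε) • t) ≤ |B| := le_trans (le_abs_self _)
      (le_trans (hB _ htK) (le_abs_self B))
    have hteq' : ⟪x, t⟫ = FP x := hteq
    have h3 : ⟪x, (1 - ε) • t⟫ = (1 - ε) * FP x := by
      rw [real_inner_smul_right, hteq']
    linarith
  · -- reverse direction
    intro h s hs
    -- find t > 0 with (1+t) • s ∈ P
    have hcont : Continuous (fun t : ℝ => (1 + t) • s) := by continuity
    have hnhds : (fun t : ℝ => (1 + t) • s) ⁻¹' interior P ∈ 𝓝 (0:ℝ) := by
      apply hcont.continuousAt.preimage_mem_nhds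
      simpa using isOpen_interior.mem_nhds hs
    obtain ⟨δ, hδpos, hδ⟩ := Metric.mem_nhds_iff.1 hnhds
    have htmem : (1 + δ/2) • s ∈ P := by
      have : (δ/2 : ℝ) ∈ Metric.ball (0:ℝ) δ := by
        rw [Metric.mem_ball, Real.dist_eq, sub_zero, abs_of_pos (by positivity)]
        linarith
      exact interior_subset (hδ this)
    set t : ℝ := δ/2 with ht
    have htpos : 0 < t := by positivity
    set ε : ℝ := t / (1 + t) with hε
    have hεmem : ε ∈ Set.Ioo (0:ℝ) 1 := by
      constructor
      · positivity
      · rw [hε, div_lt_one (by linarith)]; linarith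
    obtain ⟨M, hMpos, hM⟩ := h ε hεmem
    have hone : (1 - ε) * (1 + t) = 1 := by
      rw [hε]; field_simp; ring
    rw [hG]
    refine lt_of_le_of_lt (iSup_le fun x => ?_) (EReal.coe_lt_top M)
    rw [EReal.coe_le_coe_iff]
    have hub : ⟪x, (1 + t) • s⟫ ≤ FP x := (hFP x).2 ⟨(1 + t) • s, htmem, rfl⟩
    have hxs : ⟪x, s⟫ = (1 - ε) * ⟪x, (1 + t) • s⟫ := by
      rw [real_inner_smul_right]
      rw [← mul_assoc, hone, one_mul]
    have h1 : (1 - ε) * ⟪x, (1 + t) • s⟫ ≤ (1 - ε) * FP x :=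
      mul_le_mul_of_nonneg_left hub (by linarith [hεmem.2])
    have h2 := hM x
    linarith [hxs ▸ h1]
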